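/- arXiv:0906.4903 — 2 statements merged into one kernel-verified Lean document; each statement's English description precedes it below -/
import Mathlib

section
/- The Pontryagin dual of the discrete additive group ℚ is isomorphic as a topological group to the quotient (ℝ × Ẑ)/ℤ, where ℤ embeds diagonally via n ↦ (n, n). Explicitly, the map γ sending the class of (r, z) to the character m/n ↦ exp(2πi (r − z mod n)·(m/n)) is a well-defined isomorphism of topological groups. -/
open scoped Real

instance (n : ℕ) : TopologicalSpace (ZMod n) := ⊥

instance (n : ℕ) : DiscreteTopology (ZMod n) := ⟨rfl⟩

/-- The profinite completion `Ẑ` of `ℤ`, as the inverse limit of the `ℤ/nℤ`. -/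
def ZHat : Subring (Π n : ℕ+, ZMod n) where
  carrier := {f | ∀ (m n : ℕ+) (h : (m : ℕ) ∣ (n : ℕ)),
    ZMod.castHom h (ZMod m) (f n) = f m}
  zero_mem' := by intro m n h; exact map_zero (ZMod.castHom h (ZMod (m : ℕ)))
  one_mem' := by intro m n h; exact map_one (ZMod.castHom h (ZMod (m : ℕ)))
  add_mem' := by intro a b ha hb m n h; simp only [Pi.add_apply, map_add, ha m n h, hb m n h]
  neg_mem' := by intro a ha m n h; simp only [Pi.neg_apply, map_neg, ha m n h]
  mul_mem' := by intro a b ha hb m n h; simp only [Pi.mul_apply, map_mul, ha m n h, hb m n h]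

instance (n : ℕ+) : NeZero (n : ℕ) := ⟨n.ne_zero⟩

lemma zhat_congr (z : ZHat) {m n : ℕ+} (h : (m:ℕ) ∣ (n:ℕ)) :
    ∃ k : ℤ, (((z.1 n).val : ℤ)) = ((z.1 m).val : ℤ) + (m:ℤ) * k := by
  have h1 : (((z.1 n).val : ZMod (m:ℕ))) = ((z.1 m).val : ZMod (m:ℕ)) := by
    have := z.2 m n h
    rw [ZMod.castHom_apply] at this
    rw [ZMod.natCast_val, ZMod.natCast_val, this, ZMod.cast_id]
  have h2 := (ZMod.natCast_eq_natCast_iff _ _ _).mp h1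
  have h3 : ((m:ℕ):ℤ) ∣ ((z.1 n).val : ℤ) - ((z.1 m).val : ℤ) :=
    (Int.natCast_modEq_iff.mpr h2.symm).dvd
  obtain ⟨k, hk⟩ := h3
  exact ⟨k, by linarith⟩

lemma den_cast_mul (q : ℚ) : ((q.den : ℝ)) * (q : ℝ) = (q.num : ℝ) := by
  have h : ((q.den : ℚ)) * q = (q.num : ℚ) := by
    rw [mul_comm]; exact_mod_cast Rat.mul_den_eq_num q
  exact_mod_cast congrArg (Rat.cast : ℚ → ℝ) h

lemma circle_exp_int (k : ℤ) : Circle.exp (2 * π * k) = 1 := by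
  ext
  rw [Circle.coe_exp]
  push_cast
  rw [show ((2:ℂ) * π * k * Complex.I) = k * (2 * π * Complex.I) by ring]
  exact Complex.exp_int_mul_two_pi_mul_I k

lemma circle_exp_add_int (x : ℝ) (k : ℤ) : Circle.exp (x + 2 * π * k) = Circle.exp x := by
  rw [Circle.exp_add, circle_exp_int, mul_one]

lemma circle_exp_eq_one_iff {x : ℝ} : Circle.exp x = 1 ↔ ∃ k : ℤ, x = 2 * π * k := by
  constructor
  · intro h
    have h2 : Complex.exp (x * Complex.I) = 1 := by
      rw [← Circle.coe_exp, h]; rfl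
    obtain ⟨n, hn⟩ := Complex.exp_eq_one_iff.mp h2
    refine ⟨n, ?_⟩
    have h3 : (x : ℂ) = 2 * π * n := by
      have hI : (Complex.I : ℂ) ≠ 0 := Complex.I_ne_zero
      have : (x : ℂ) * Complex.I = (2 * π * n : ℂ) * Complex.I := by rw [hn]; ring
      exact mul_right_cancel₀ hI this
    exact_mod_cast h3
  · rintro ⟨k, rfl⟩; exact circle_exp_int k

/-- denominator of q as a ℕ+ -/
def qden (q : ℚ) : ℕ+ := ⟨q.den, q.pos⟩

/-- The underlying character function. -/
noncomputable def chifun (p : ℝ × ZHat) (q : ℚ) : Circle :=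
  Circle.exp (2 * π * ((p.1 - (((p.2.1 (qden q)).val : ℕ) : ℝ)) * (q : ℝ)))

lemma circle_exp_den_shift (r : ℝ) (q : ℚ) (a b : ℤ) (h : (q.den : ℤ) ∣ a - b) :
    Circle.exp (2 * π * ((r - (a:ℝ)) * (q:ℝ))) = Circle.exp (2 * π * ((r - (b:ℝ)) * (q:ℝ))) := by
  obtain ⟨k, hk⟩ := h
  have hd : ((q.den : ℝ)) * (q : ℝ) = (q.num : ℝ) := den_cast_mul q
  have ha : (a : ℝ) = (b : ℝ) + (q.den : ℝ) * (k : ℝ) := by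
    exact_mod_cast congrArg (Int.cast : ℤ → ℝ) (by linarith [hk] : a = b + (q.den:ℤ) * k)
  have : 2 * π * ((r - (a:ℝ)) * (q:ℝ)) =
      2 * π * ((r - (b:ℝ)) * (q:ℝ)) + 2 * π * (((-k) * q.num : ℤ) : ℝ) := by
    push_cast
    rw [ha, ← hd]; ring
  rw [this, circle_exp_add_int]

lemma chifun_rep (p : ℝ × ZHat) (q : ℚ) (n : ℕ+) (h : q.den ∣ (n:ℕ)) :
    chifun p q = Circle.exp (2 * π * ((p.1 - (((p.2.1 n).val : ℕ) : ℝ)) * (q : ℝ))) := by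
  obtain ⟨k, hk⟩ := zhat_congr p.2 (m := qden q) (n := n) h
  rw [chifun]
  refine (circle_exp_den_shift p.1 q ((p.2.1 (qden q)).val : ℤ) ((p.2.1 n).val : ℤ) ⟨-k, by
    have : ((qden q : ℕ) : ℤ) = (q.den : ℤ) := rfl
    rw [← this]; linarith⟩).symm.symm.trans ?_ |>.symm.trans ?_ |>.symm
  · rfl
  · rfl

lemma chifun_zero (p : ℝ × ZHat) : chifun p 0 = 1 := by
  simp [chifun]

lemma chifun_add_q (p : ℝ × ZHat) (a b : ℚ) :
    chifun p (a + b) = chifun p a * chifun p b := by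
  set n : ℕ+ := qden a * qden b with hn
  have hna : a.den ∣ (n:ℕ) := by show a.den ∣ a.den * b.den; exact dvd_mul_right _ _
  have hnb : b.den ∣ (n:ℕ) := by show b.den ∣ a.den * b.den; exact dvd_mul_left _ _
  have hnab : (a+b).den ∣ (n:ℕ) := by
    show (a+b).den ∣ a.den * b.den; exact Rat.add_den_dvd a b
  rw [chifun_rep p a n hna, chifun_rep p b n hnb, chifun_rep p (a+b) n hnab, ← Circle.exp_add]
  congr 1
  push_cast
  ring

lemma chifun_add_p (p p' : ℝ × ZHat) (q : ℚ) :
    chifun (p + p') q = chifun p q * chifun p' q := by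
  set d : ℕ+ := qden q with hd
  have h1n : ((p.2.1 d + p'.2.1 d).val) ≡ (p.2.1 d).val + (p'.2.1 d).val [MOD (d:ℕ)] := by
    rw [ZMod.val_add]; exact Nat.mod_modEq _ _
  have h1 : ((d:ℕ):ℤ) ∣ (((p.2.1 d + p'.2.1 d).val : ℤ)) -
      (((p.2.1 d).val : ℤ) + ((p'.2.1 d).val : ℤ)) := by
    have := (Int.natCast_modEq_iff.mpr h1n).dvd
    push_cast at this
    exact (dvd_sub_comm.mp this)
  have key : Circle.exp (2 * π * (((p.1 + p'.1) - (((p.2.1 d + p'.2.1 d).val : ℕ) : ℝ)) * (q:ℝ)))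
      = Circle.exp (2 * π * (((p.1 + p'.1) -
        ((((p.2.1 d).val : ℕ) : ℝ) + (((p'.2.1 d).val : ℕ) : ℝ))) * (q:ℝ))) := by
    have := circle_exp_den_shift (p.1 + p'.1) q ((p.2.1 d + p'.2.1 d).val : ℤ)
      (((p.2.1 d).val : ℤ) + ((p'.2.1 d).val : ℤ)) h1
    refine this.trans ?_
    push_cast
    ring_nf
  calc chifun (p + p') q
      = Circle.exp (2 * π * (((p.1 + p'.1) - (((p.2.1 d + p'.2.1 d).val : ℕ) : ℝ)) * (q:ℝ))) := rfl
    _ = Circle.exp (2 * π * (((p.1 + p'.1) -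
          ((((p.2.1 d).val : ℕ) : ℝ) + (((p'.2.1 d).val : ℕ) : ℝ))) * (q:ℝ))) := key
    _ = Circle.exp (2 * π * ((p.1 - (((p.2.1 d).val : ℕ) : ℝ)) * (q:ℝ)) +
          2 * π * ((p'.1 - (((p'.2.1 d).val : ℕ) : ℝ)) * (q:ℝ))) := by congr 1; ring
    _ = _ := by rw [Circle.exp_add]; rfl

/-- The diagonal embedding `ℤ → ℝ × Ẑ`, `n ↦ (n, n)`. -/
def diagZ : ℤ →+ ℝ × ZHat :=
  ((Int.castRingHom ℝ).toAddMonoidHom).prod ((Int.castRingHom ZHat).toAddMonoidHom)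

noncomputable def chiHom (p : ℝ × ZHat) : ℚ →+ Additive Circle where
  toFun q := Additive.ofMul (chifun p q)
  map_zero' := by show Additive.ofMul (chifun p 0) = 0; rw [chifun_zero]; rfl
  map_add' a b := by
    show Additive.ofMul (chifun p (a+b)) = Additive.ofMul (chifun p a) + Additive.ofMul (chifun p b)
    rw [chifun_add_q]; rfl

noncomputable def chi : (ℝ × ZHat) →+ (ℚ →+ Additive Circle) where
  toFun := chiHom
  map_zero' := by
    apply AddMonoidHom.ext; intro q
    show Additive.ofMul (chifun 0 q) = 0
    have : chifun 0 q = 1 := by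
      show Circle.exp (2 * π * ((0 - ((((0:ZHat).1 (qden q)).val : ℕ) : ℝ)) * (q:ℝ))) = 1
      have hz : ((0:ZHat).1 (qden q)) = 0 := rfl
      rw [hz, ZMod.val_zero]
      norm_num
    rw [this]; rfl
  map_add' p p' := by
    apply AddMonoidHom.ext; intro q
    show Additive.ofMul (chifun (p+p') q) = Additive.ofMul (chifun p q) + Additive.ofMul (chifun p' q)
    rw [chifun_add_p]; rfl

lemma chi_range_le_ker : diagZ.range ≤ chi.ker := by
  rintro _ ⟨k, rfl⟩
  apply AddMonoidHom.ext; intro q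
  show Additive.ofMul (chifun (diagZ k) q) = 0
  have h1 : ((diagZ k).2.1 (qden q)) = ((k : ℤ) : ZMod (qden q : ℕ)) := rfl
  have h2 : ((diagZ k).1) = (k : ℝ) := rfl
  have hmod : ((qden q : ℕ):ℤ) ∣ (k : ℤ) - (((k : ZMod (qden q : ℕ)).val : ℤ)) := by
    rw [ZMod.val_intCast]
    exact ⟨k / ((qden q : ℕ):ℤ), by rw [Int.emod_def]; ring⟩
  have : chifun (diagZ k) q = 1 := by
    show Circle.exp (2 * π * (((k:ℝ) - (((k : ZMod (qden q : ℕ)).val : ℕ) : ℝ)) * (q:ℝ))) = 1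
    have := circle_exp_den_shift (k : ℝ) q ((k : ZMod (qden q : ℕ)).val : ℤ) k
      (by exact (dvd_sub_comm.mp hmod))
    calc Circle.exp (2 * π * (((k:ℝ) - (((k : ZMod (qden q : ℕ)).val : ℕ) : ℝ)) * (q:ℝ)))
        = Circle.exp (2 * π * (((k:ℝ) - ((k:ℤ):ℝ)) * (q:ℝ))) := by
          refine (circle_exp_den_shift (k : ℝ) q ((k : ZMod (qden q : ℕ)).val : ℤ) k
            (dvd_sub_comm.mp hmod)).symm.symm.trans ?_
          norm_num
      _ = 1 := by norm_num
  rw [this]; rfl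

lemma den_div_dvd (m : ℤ) (n : ℕ+) : ((m:ℚ)/(n:ℚ)).den ∣ (n:ℕ) := by
  have := Rat.den_dvd m (n:ℤ)
  rw [Rat.divInt_eq_div] at this
  exact_mod_cast this

lemma two_pi_ne : (2 * π : ℝ) ≠ 0 := by positivity

lemma chi_ker_le_range : chi.ker ≤ diagZ.range := by
  rintro ⟨r, z⟩ hp
  have hval : ∀ q : ℚ, chifun (r, z) q = 1 := by
    intro q
    have := congrFun (congrArg (DFunLike.coe) hp) q
    exact this
  -- value at 1 : r is an integer
  have h1 : Circle.exp (2 * π * ((r - (((z.1 1).val : ℕ) : ℝ)) * ((1:ℚ):ℝ))) = 1 := by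
    rw [← chifun_rep (r, z) 1 1 (by norm_num)]
    exact hval 1
  have hz1 : (z.1 1).val = 0 := by
    have h0 : (z.1 1).val < ((1:ℕ+):ℕ) := ZMod.val_lt _
    have h1 : ((1:ℕ+):ℕ) = 1 := rfl
    omega
  obtain ⟨k, hk⟩ := circle_exp_eq_one_iff.mp h1
  have hr : r = (k : ℝ) := by
    rw [hz1] at hk
    have := mul_left_cancel₀ two_pi_ne hk
    push_cast at this
    linarith
  -- value at 1/n
  have hzn : ∀ n : ℕ+, z.1 n = ((k : ℤ) : ZMod (n:ℕ)) := by
    intro n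
    have hq : ((1:ℚ)/(n:ℚ)).den ∣ (n:ℕ) := by
      have := den_div_dvd 1 n
      push_cast at this ⊢
      exact this
    have h2 : Circle.exp (2 * π * ((r - (((z.1 n).val : ℕ) : ℝ)) * (((1:ℚ)/(n:ℚ) : ℚ):ℝ))) = 1 := by
      rw [← chifun_rep (r, z) (1/(n:ℚ)) n hq]
      exact hval _
    obtain ⟨t, ht⟩ := circle_exp_eq_one_iff.mp h2
    have ht2 := mul_left_cancel₀ two_pi_ne ht
    have hcast : (((1:ℚ)/(n:ℚ) : ℚ):ℝ) = 1/(n:ℝ) := by push_cast; ring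
    rw [hcast, hr] at ht2
    have hnne : ((n:ℕ):ℝ) ≠ 0 := by exact_mod_cast n.ne_zero
    have hkv : (k : ℝ) - ((z.1 n).val : ℝ) = (n:ℕ) * t := by
      rw [mul_one_div, div_eq_iff hnne] at ht2
      linarith
    have hkz : (k : ℤ) - ((z.1 n).val : ℤ) = (n:ℕ) * t := by exact_mod_cast hkv
    have : ((z.1 n).val : ℤ) ≡ k [ZMOD (n:ℕ)] := Int.ModEq.symm (Int.modEq_iff_dvd.mpr ⟨-t, by linarith⟩)
    calc z.1 n = (((z.1 n).val : ℤ) : ZMod (n:ℕ)) := by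
          push_cast
          rw [ZMod.natCast_val, ZMod.cast_id]
      _ = ((k : ℤ) : ZMod (n:ℕ)) := (ZMod.intCast_eq_intCast_iff _ _ _).mpr this
  refine ⟨k, ?_⟩
  refine Prod.ext ?_ ?_
  · exact hr.symm
  · refine Subtype.ext (funext fun n => ?_)
    exact (hzn n).symm

lemma circle_exp_zsmul (x : ℝ) (k : ℤ) : Circle.exp ((k:ℝ) * x) = (Circle.exp x)^k := by
  have h1 : ((k:ℝ)) * x = k • x := (zsmul_eq_mul x k).symm
  rw [h1]
  have := map_zsmul Circle.expHom k x
  exact congrArg Additive.toMul this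

noncomputable def clift (c : Circle) : ℝ := Complex.arg c / (2 * π)

lemma clift_spec (c : Circle) : Circle.exp (2 * π * clift c) = c := by
  ext
  rw [Circle.coe_exp]
  have h1 : 2 * π * clift c = Complex.arg c := by
    rw [clift]; field_simp
  rw [h1]
  have := Complex.norm_mul_exp_arg_mul_I (c : ℂ)
  rwa [c.norm_coe, Complex.ofReal_one, one_mul] at this

lemma chi_surjective : Function.Surjective chi := by
  intro φ
  set Φ : ℚ → Circle := fun q => Additive.toMul (φ q) with hΦ
  have key : ∀ (x : ℚ) (m : ℤ), Φ ((m:ℚ) * x) = (Φ x)^m := by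
    intro x m
    have h1 : ((m:ℚ)) * x = m • x := (zsmul_eq_mul x m).symm
    rw [hΦ]
    simp only
    rw [h1, map_zsmul, toMul_zsmul]
  set r : ℝ := clift (Φ 1) with hr
  set y : ℕ+ → ℝ := fun n => clift (Φ (1/(n:ℚ))) with hy
  have hyn : ∀ n : ℕ+, Circle.exp (2 * π * y n) = Φ (1/(n:ℚ)) := fun n => clift_spec _
  have hr1 : Circle.exp (2 * π * r) = Φ 1 := clift_spec _
  have hint : ∀ n : ℕ+, ∃ wk : ℤ, (wk:ℝ) = r - ((n:ℕ):ℝ) * y n := by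
    intro n
    have hnq : ((n:ℕ):ℚ) ≠ 0 := by exact_mod_cast n.ne_zero
    have h2 : Φ 1 = (Φ (1/(n:ℚ)))^((n:ℕ):ℤ) := by
      rw [← key (1/(n:ℚ)) ((n:ℕ):ℤ)]
      congr 1
      push_cast
      field_simp
    have h3 : Circle.exp (2 * π * (r - ((n:ℕ):ℝ) * y n)) = 1 := by
      have harith : 2 * π * (r - ((n:ℕ):ℝ) * y n) =
          2 * π * r + ((-((n:ℕ):ℤ) : ℤ):ℝ) * (2 * π * y n) := by push_cast; ring
      rw [harith, Circle.exp_add, circle_exp_zsmul, hyn, hr1, h2, ← zpow_add]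
      norm_num
    obtain ⟨k, hk⟩ := circle_exp_eq_one_iff.mp h3
    exact ⟨k, (mul_left_cancel₀ two_pi_ne hk).symm⟩
  choose w hw using hint
  have hmem : (fun n : ℕ+ => ((w n : ZMod (n:ℕ)))) ∈ ZHat := by
    intro m n h
    obtain ⟨c, hc⟩ := id h
    have hc0 : c ≠ 0 := by
      rintro rfl
      exact n.ne_zero (by simpa using hc)
    have hmq : ((m:ℕ):ℚ) ≠ 0 := by exact_mod_cast m.ne_zero
    have hnq : ((n:ℕ):ℚ) ≠ 0 := by exact_mod_cast n.ne_zero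
    have hcq : ((c:ℚ)) * (1/((n:ℕ):ℚ)) = 1/((m:ℕ):ℚ) := by
      have : ((n:ℕ):ℚ) = ((m:ℕ):ℚ) * (c:ℚ) := by exact_mod_cast hc
      rw [this]
      have hcq0 : (c:ℚ) ≠ 0 := by exact_mod_cast hc0
      field_simp
    have h2 : Φ (1/((m:ℕ):ℚ)) = (Φ (1/((n:ℕ):ℚ)))^((c:ℕ):ℤ) := by
      rw [← key (1/((n:ℕ):ℚ)) (c:ℤ), ← hcq]
      norm_num
    have h3 : Circle.exp (2 * π * (y m - (c:ℝ) * y n)) = 1 := by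
      have harith : 2 * π * (y m - (c:ℝ) * y n) =
          2 * π * y m + ((-(c:ℤ) : ℤ):ℝ) * (2 * π * y n) := by push_cast; ring
      rw [harith, Circle.exp_add, circle_exp_zsmul, hyn, hyn, h2, ← zpow_add]
      norm_num
    obtain ⟨s, hs⟩ := circle_exp_eq_one_iff.mp h3
    have hs' : y m - (c:ℝ) * y n = (s:ℝ) := mul_left_cancel₀ two_pi_ne hs
    have hwr : ((w n : ℤ) : ℝ) - ((w m : ℤ) : ℝ) = ((m:ℕ):ℝ) * (s:ℝ) := by
      rw [hw n, hw m]
      have hcr : ((n:ℕ):ℝ) = ((m:ℕ):ℝ) * (c:ℝ) := by exact_mod_cast hc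
      rw [hcr]
      nlinarith [hs']
    have hwz : (w n : ℤ) - (w m : ℤ) = ((m:ℕ):ℤ) * s := by exact_mod_cast hwr
    show ZMod.castHom h (ZMod (m:ℕ)) ((w n : ZMod (n:ℕ))) = (w m : ZMod (m:ℕ))
    rw [map_intCast, ZMod.intCast_eq_intCast_iff]
    exact Int.ModEq.symm (Int.modEq_iff_dvd.mpr ⟨s, by linarith⟩)
  refine ⟨(r, ⟨fun n : ℕ+ => ((w n : ZMod (n:ℕ))), hmem⟩), ?_⟩
  apply AddMonoidHom.ext; intro q
  show Additive.ofMul (chifun _ q) = φ q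
  set d : ℕ+ := qden q with hd
  have hdq : q.den = (d:ℕ) := rfl
  have hval : (((w d : ZMod (d:ℕ)).val : ℤ)) = w d % ((d:ℕ):ℤ) := ZMod.val_intCast _
  have hdvd : (q.den : ℤ) ∣ ((w d : ZMod (d:ℕ)).val : ℤ) - w d := by
    rw [hval, hdq]
    exact ⟨-(w d / ((d:ℕ):ℤ)), by rw [Int.emod_def]; ring⟩
  have hnum : ((q.num:ℚ)) * (1/((d:ℕ):ℚ)) = q := by
    rw [hdq.symm]
    push_cast
    rw [mul_one_div]
    exact Rat.num_div_den q
  have step : chifun (r, ⟨fun n : ℕ+ => ((w n : ZMod (n:ℕ))), hmem⟩) q = Φ q := by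
    calc chifun (r, ⟨fun n : ℕ+ => ((w n : ZMod (n:ℕ))), hmem⟩) q
        = Circle.exp (2 * π * ((r - (((w d : ZMod (d:ℕ)).val : ℤ):ℝ)) * (q:ℝ))) := by
          rw [chifun]; push_cast; rfl
      _ = Circle.exp (2 * π * ((r - ((w d : ℤ):ℝ)) * (q:ℝ))) :=
          circle_exp_den_shift r q _ _ hdvd
      _ = Circle.exp (((q.num : ℤ):ℝ) * (2 * π * y d)) := by
          congr 1
          have h5 : r - ((w d : ℤ):ℝ) = ((d:ℕ):ℝ) * y d := by rw [hw d]; ring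
          have h6 : ((q.den : ℝ)) * (q : ℝ) = (q.num : ℝ) := den_cast_mul q
          rw [h5]
          rw [hdq] at h6
          linear_combination (2 * π * y d) * h6
      _ = (Circle.exp (2 * π * y d))^(q.num) := circle_exp_zsmul _ _
      _ = (Φ (1/((d:ℕ):ℚ)))^(q.num) := by rw [hyn]
      _ = Φ ((q.num:ℚ) * (1/((d:ℕ):ℚ))) := (key _ _).symm
      _ = Φ q := by rw [hnum]
  rw [step]
  rfl

/-- The compact group `Y = (ℝ × Ẑ)/ℤ`, with `ℤ` embedded diagonally. -/
def Y : Type := (ℝ × ZHat) ⧸ diagZ.range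

instance : AddCommGroup Y := inferInstanceAs (AddCommGroup ((ℝ × ZHat) ⧸ diagZ.range))

instance : TopologicalSpace Y :=
  inferInstanceAs (TopologicalSpace ((ℝ × ZHat) ⧸ diagZ.range))

/-- The Pontryagin dual of the discrete group `ℚ`: all group homomorphisms
`ℚ → 𝕋`, with the topology of pointwise convergence. -/
noncomputable instance : TopologicalSpace (ℚ →+ Additive Circle) :=
  TopologicalSpace.induced (fun φ => (φ : ℚ → Additive Circle)) inferInstance

noncomputable def ebar : Y →+ (ℚ →+ Additive Circle) :=
  QuotientAddGroup.lift diagZ.range chi chi_range_le_ker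

lemma ebar_bij : Function.Bijective ebar := by
  constructor
  · rw [injective_iff_map_eq_zero]
    intro x hx
    induction x using QuotientAddGroup.induction_on with
    | H p =>
      have h1 : chi p = 0 := hx
      exact (QuotientAddGroup.eq_zero_iff p).mpr (chi_ker_le_range h1)
  · intro φ
    obtain ⟨p, hp⟩ := chi_surjective φ
    exact ⟨QuotientAddGroup.mk p, hp⟩

lemma val_continuous (d : ℕ+) :
    Continuous (fun p : ℝ × ZHat => (((p.2.1 d).val : ℕ) : ℝ)) := by
  have h1 : Continuous (fun p : ℝ × ZHat => p.2.1 d) :=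
    (continuous_apply (d : ℕ+)).comp (continuous_subtype_val.comp continuous_snd)
  have h2 : (fun p : ℝ × ZHat => (((p.2.1 d).val : ℕ) : ℝ)) =
      (fun x : ZMod (d:ℕ) => ((x.val : ℕ) : ℝ)) ∘ (fun p : ℝ × ZHat => p.2.1 d) := rfl
  rw [h2]
  exact continuous_of_discreteTopology.comp h1

lemma chi_continuous : Continuous chi := by
  rw [continuous_induced_rng]
  apply continuous_pi
  intro q
  show Continuous fun p : ℝ × ZHat => Additive.ofMul (chifun p q)
  apply continuous_ofMul.comp
  apply Circle.exp.continuous.comp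
  exact (continuous_const.mul ((continuous_fst.sub (val_continuous (qden q))).mul
    continuous_const))

instance : CompactSpace ZHat := by
  have hclosed : IsClosed (ZHat : Set (Π n : ℕ+, ZMod (n:ℕ))) := by
    have heq : (ZHat : Set (Π n : ℕ+, ZMod (n:ℕ))) =
        ⋂ (m : ℕ+) (n : ℕ+) (h : (m:ℕ) ∣ (n:ℕ)),
          {f : Π n : ℕ+, ZMod (n:ℕ) | ZMod.castHom h (ZMod (m:ℕ)) (f n) = f m} := by
      ext f
      simp only [Set.mem_iInter, Set.mem_setOf_eq]
      rfl
    rw [heq]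
    refine isClosed_iInter fun m => isClosed_iInter fun n => isClosed_iInter fun h => ?_
    exact isClosed_eq (continuous_of_discreteTopology.comp (continuous_apply n))
      (continuous_apply m)
  exact isCompact_iff_compactSpace.mp hclosed.isCompact

instance : CompactSpace Y := by
  constructor
  have hK : IsCompact ((Set.Icc (0:ℝ) 1) ×ˢ (Set.univ : Set ZHat)) :=
    isCompact_Icc.prod isCompact_univ
  have himg : (QuotientAddGroup.mk '' ((Set.Icc (0:ℝ) 1) ×ˢ (Set.univ : Set ZHat)) : Set Y)
      = Set.univ := by
    refine Set.eq_univ_of_forall fun yy => ?_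
    induction yy using QuotientAddGroup.induction_on with
    | H p =>
      obtain ⟨r, z⟩ := p
      refine ⟨(Int.fract r, z - (⌊r⌋ : ℤ)), ⟨⟨Int.fract_nonneg r, (Int.fract_lt_one r).le⟩,
        Set.mem_univ _⟩, ?_⟩
      refine (QuotientAddGroup.eq).mpr ?_
      refine ⟨⌊r⌋, ?_⟩
      show ((⌊r⌋ : ℝ), ((⌊r⌋ : ℤ) : ZHat)) = -(Int.fract r, z - (⌊r⌋ : ℤ)) + (r, z)
      refine Prod.ext ?_ ?_
      · show (⌊r⌋ : ℝ) = -Int.fract r + r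
        rw [Int.fract]
        ring
      · show ((⌊r⌋ : ℤ) : ZHat) = -(z - (⌊r⌋ : ℤ)) + z
        ring
  have : IsCompact (QuotientAddGroup.mk '' ((Set.Icc (0:ℝ) 1) ×ˢ (Set.univ : Set ZHat)) : Set Y) :=
    hK.image continuous_quotient_mk'
  rwa [himg] at this

instance : T2Space (ℚ →+ Additive Circle) := by
  have hemb : Topology.IsEmbedding (fun φ : ℚ →+ Additive Circle => (φ : ℚ → Additive Circle)) :=
    ⟨⟨rfl⟩, DFunLike.coe_injective⟩
  exact hemb.t2Space

/-- The Pontryagin dual of the discrete group `ℚ` is isomorphic as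
a topological group to `(ℝ × Ẑ)/ℤ`, via the map `γ` sending the class of
`(r, z)` to the character `m/n ↦ exp(2πi (r − z(n)) · (m/n))`. -/
theorem dual_Q_iso_R_times_ZHat_mod_Z :
    ∃ e : Y ≃+ (ℚ →+ Additive Circle),
      Continuous e ∧ Continuous e.symm ∧
      ∀ (r : ℝ) (z : ZHat) (m : ℤ) (n : ℕ+),
        e (QuotientAddGroup.mk (r, z) : Y) ((m : ℚ) / (n : ℚ)) =
          Additive.ofMul (Circle.exp
            (2 * π * ((r - ((z.1 n).val : ℝ)) * ((m : ℝ) / (n : ℝ))))) := by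
  have hc : Continuous ebar := continuous_quot_lift _ chi_continuous
  refine ⟨AddEquiv.ofBijective ebar ebar_bij, hc, ?_, ?_⟩
  · exact ((Continuous.homeoOfEquivCompactToT2
      (f := (AddEquiv.ofBijective ebar ebar_bij).toEquiv) hc).symm).continuous
  · intro r z m n
    show chi (r, z) ((m:ℚ)/(n:ℚ)) = _
    show Additive.ofMul (chifun (r, z) ((m:ℚ)/(n:ℚ))) = _
    rw [chifun_rep (r, z) _ n (den_div_dvd m n)]
    congr 2
    push_cast
    ring
end

section
/- Let φ be an automorphism of a free abelian group A of finite rank with φ² = id. Then A admits a ℤ-basis with respect to which the matrix of φ is block upper triangular with diagonal entries ±1; moreover the quotient A/im(id − φ) is isomorphic to ℤ^a ⊕ (ℤ/2ℤ)^b for some nonnegative integers a, b. -/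
def zmodCongr {m n : ℕ} (h : m = n) : ZMod m ≃+ ZMod n := by subst h; exact AddEquiv.refl _

lemma aux_fg_exp2 (G : Type*) [AddCommGroup G] [AddGroup.FG G]
    (h2 : ∀ x : G, (∃ n : ℕ, 0 < n ∧ n • x = 0) → 2 • x = 0) :
    ∃ a b : ℕ, Nonempty (G ≃+ (Fin a → ℤ) × (Fin b → ZMod 2)) := by
  classical
  obtain ⟨n, ι, fι, p, hp, e, ⟨f⟩⟩ := AddCommGroup.equiv_free_prod_directSum_zmod G
  have hdvd : ∀ i, p i ^ e i ∣ 2 := by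
    intro i
    have hm : 0 < p i ^ e i := pow_pos (hp i).pos _
    set x : (Fin n →₀ ℤ) × DirectSum ι fun i => ZMod (p i ^ e i) :=
      (0, DirectSum.of (fun i => ZMod (p i ^ e i)) i 1) with hx
    have ht : (p i ^ e i) • (f.symm x) = 0 := by
      rw [← map_nsmul, hx]
      have : (p i ^ e i) • (DirectSum.of (fun i => ZMod (p i ^ e i)) i 1) =
          DirectSum.of (fun i => ZMod (p i ^ e i)) i ((p i ^ e i) • (1 : ZMod (p i ^ e i))) :=
        (map_nsmul (DirectSum.of (fun i => ZMod (p i ^ e i)) i) _ _).symm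
      rw [Prod.smul_def, smul_zero, this, nsmul_eq_mul, mul_one, ZMod.natCast_self, map_zero]
      exact map_zero f.symm
    have h2x : 2 • f.symm x = 0 := h2 _ ⟨p i ^ e i, hm, ht⟩
    have : 2 • x = 0 := by
      have := congrArg f h2x
      rwa [map_nsmul, AddEquiv.apply_symm_apply, map_zero] at this
    have hcomp := congrArg Prod.snd this
    have hval : (2 • DirectSum.of (fun i => ZMod (p i ^ e i)) i 1) i = 0 := by
      rw [show (2 • DirectSum.of (fun i => ZMod (p i ^ e i)) i 1) = 0 from hcomp]; rfl
    rw [DFinsupp.smul_apply, DirectSum.of_eq_same, nsmul_eq_mul, mul_one] at hval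
    haveI : NeZero (p i ^ e i) := ⟨hm.ne'⟩
    exact (ZMod.natCast_eq_zero_iff 2 _).mp (by exact_mod_cast hval)
  set P : ι → Prop := fun i => p i ^ e i = 2 with hP
  haveI : ∀ i : {i // ¬ P i}, Subsingleton (ZMod (p i.1 ^ e i.1)) := by
    intro i
    have h1 : p i.1 ^ e i.1 = 1 :=
      ((Nat.dvd_prime Nat.prime_two).mp (hdvd i.1)).resolve_right i.2
    rw [h1]; infer_instance
  haveI : Unique ((i : {i // ¬ P i}) → ZMod (p i.1 ^ e i.1)) :=
    uniqueOfSubsingleton 0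
  let E1 : (DirectSum ι fun i => ZMod (p i ^ e i)) ≃+ ((i : ι) → ZMod (p i ^ e i)) :=
    (DirectSum.linearEquivFunOnFintype ℤ ι _).toAddEquiv
  let E2 : ((i : ι) → ZMod (p i ^ e i)) ≃+
      (((i : {i // P i}) → ZMod (p i.1 ^ e i.1)) × ((i : {i // ¬ P i}) → ZMod (p i.1 ^ e i.1))) :=
    AddEquiv.mk' (Equiv.piEquivPiSubtypeProd P _) (fun _ _ => rfl)
  let E4 : ((i : {i // P i}) → ZMod (p i.1 ^ e i.1)) ≃+ ((i : {i // P i}) → ZMod 2) :=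
    AddEquiv.piCongrRight fun i => zmodCongr i.2
  let E5 : ((i : {i // P i}) → ZMod 2) ≃+ (Fin (Fintype.card {i // P i}) → ZMod 2) :=
    AddEquiv.mk' (Equiv.arrowCongr (Fintype.equivFin _) (Equiv.refl _)) (fun _ _ => rfl)
  let F1 : (Fin n →₀ ℤ) ≃+ (Fin n → ℤ) :=
    AddEquiv.mk' Finsupp.equivFunOnFinite (fun _ _ => rfl)
  exact ⟨n, Fintype.card {i // P i},
    ⟨f.trans (AddEquiv.prodCongr F1
      (E1.trans (E2.trans (AddEquiv.prodUnique.trans (E4.trans E5)))))⟩⟩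
theorem aux_part1 {A : Type*} [AddCommGroup A] [Module.Free ℤ A] [Module.Finite ℤ A]
    (φ : A ≃+ A) (hφ : ∀ a, φ (φ a) = a) :
    ∃ (n : ℕ) (bas : Module.Basis (Fin n) ℤ A),
      (∀ i j : Fin n, j < i →
        LinearMap.toMatrix bas bas (φ.toAddMonoidHom.toIntLinearMap) i j = 0) ∧
      (∀ i : Fin n,
        LinearMap.toMatrix bas bas (φ.toAddMonoidHom.toIntLinearMap) i i = 1 ∨
        LinearMap.toMatrix bas bas (φ.toAddMonoidHom.toIntLinearMap) i i = -1) := by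
  classical
  set ψ : A →ₗ[ℤ] A := φ.toAddMonoidHom.toIntLinearMap with hψdef
  have hψψ : ∀ a, ψ (ψ a) = a := hφ
  set S : Submodule ℤ A := LinearMap.ker (LinearMap.id - ψ) with hSdef
  have hmemS : ∀ x, x ∈ S ↔ ψ x = x := fun x => by
    rw [hSdef, LinearMap.mem_ker, LinearMap.sub_apply, LinearMap.id_apply, sub_eq_zero]
    exact eq_comm
  have hsum : ∀ a, ψ a + a ∈ S := fun a => by
    rw [hmemS, map_add, hψψ a, add_comm]
  haveI : NoZeroSMulDivisors ℤ (A ⧸ S) := by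
    constructor
    rintro c x hcx
    by_cases hc : c = 0
    · exact Or.inl hc
    refine Or.inr ?_
    obtain ⟨a, rfl⟩ := S.mkQ_surjective x
    rw [← map_smul, Submodule.mkQ_apply, Submodule.Quotient.mk_eq_zero] at hcx
    rw [Submodule.mkQ_apply, Submodule.Quotient.mk_eq_zero]
    rw [hmemS] at hcx ⊢
    rw [map_smul] at hcx
    have h0 : c • (ψ a - a) = 0 := by rw [smul_sub, hcx, sub_self]
    rcases smul_eq_zero.mp h0 with h | h
    · exact absurd h hc
    · exact sub_eq_zero.mp h
  haveI : Module.Free ℤ (A ⧸ S) := Module.free_of_finite_type_torsion_free'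
  obtain ⟨s, hs⟩ := Module.projective_lifting_property S.mkQ LinearMap.id S.mkQ_surjective
  have hsq : ∀ q, S.mkQ (s q) = q := fun q => by simpa using LinearMap.congr_fun hs q
  have hres : ∀ a : A, a - s (S.mkQ a) ∈ S := fun a => by
    rw [← Submodule.Quotient.mk_eq_zero S, ← Submodule.mkQ_apply, map_sub, hsq, sub_self]
  let fAB : A →ₗ[ℤ] S × (A ⧸ S) :=
    LinearMap.prod (LinearMap.codRestrict S (LinearMap.id - s ∘ₗ S.mkQ) fun a => hres a) S.mkQ
  let gBA : (S × (A ⧸ S)) →ₗ[ℤ] A :=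
    S.subtype ∘ₗ LinearMap.fst ℤ S (A ⧸ S) + s ∘ₗ LinearMap.snd ℤ S (A ⧸ S)
  have hgBA : ∀ z : S × (A ⧸ S), gBA z = (z.1 : A) + s z.2 := fun z => rfl
  have hfAB1 : ∀ a : A, ((fAB a).1 : A) = a - s (S.mkQ a) := fun a => rfl
  have hfAB2 : ∀ a : A, (fAB a).2 = S.mkQ a := fun a => rfl
  have hfg : fAB ∘ₗ gBA = LinearMap.id := by
    apply LinearMap.ext; rintro ⟨x, q⟩
    have h1 : S.mkQ ((x : A) + s q) = q := by
      rw [map_add, hsq, Submodule.mkQ_apply, (Submodule.Quotient.mk_eq_zero S).mpr x.2, zero_add]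
    show fAB ((x : A) + s q) = (x, q)
    refine Prod.ext (Subtype.ext ?_) ?_
    · rw [hfAB1, h1]; abel
    · rw [hfAB2, h1]
  have hgf : gBA ∘ₗ fAB = LinearMap.id := by
    apply LinearMap.ext; intro a
    show (a - s (S.mkQ a)) + s (S.mkQ a) = a
    abel
  let e : A ≃ₗ[ℤ] S × (A ⧸ S) := LinearEquiv.ofLinear fAB gBA hfg hgf
  have he : ∀ a, e a = fAB a := fun a => rfl
  have hesymm : ∀ z, e.symm z = gBA z := fun z => rfl
  set r := Module.finrank ℤ S with hr
  set q := Module.finrank ℤ (A ⧸ S) with hq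
  set bS := Module.finBasis ℤ S
  set bQ := Module.finBasis ℤ (A ⧸ S)
  set bP : Module.Basis (Fin r ⊕ Fin q) ℤ (S × (A ⧸ S)) := bS.prod bQ with hbP
  set bas : Module.Basis (Fin (r + q)) ℤ A := (bP.map e.symm).reindex finSumFinEquiv with hbas
  have hrepr : ∀ (x : A) (k : Fin r ⊕ Fin q),
      bas.repr x (finSumFinEquiv k) = bP.repr (e x) k := fun x k => by
    rw [hbas, Module.Basis.repr_reindex_apply, Equiv.symm_apply_apply, Module.Basis.map_repr]
    simp
  have hbase : ∀ k : Fin r ⊕ Fin q, bas (finSumFinEquiv k) = e.symm (bP k) := fun k => by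
    rw [hbas, Module.Basis.reindex_apply, Equiv.symm_apply_apply, Module.Basis.map_apply]
  -- columns
  have hcol1 : ∀ i0 : Fin r, e (ψ (bas (finSumFinEquiv (Sum.inl i0)))) = (bS i0, 0) := by
    intro i0
    have h1 : bas (finSumFinEquiv (Sum.inl i0)) = (bS i0 : A) := by
      rw [hbase, hesymm, hgBA]
      simp [hbP, Module.Basis.prod_apply]
    rw [h1, (hmemS _).mp (bS i0).2]
    refine Prod.ext (Subtype.ext ?_) ?_
    · rw [he, hfAB1, Submodule.mkQ_apply, (Submodule.Quotient.mk_eq_zero S).mpr (bS i0).2]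
      simp
    · rw [he, hfAB2, Submodule.mkQ_apply, (Submodule.Quotient.mk_eq_zero S).mpr (bS i0).2]
  have hcol2 : ∀ j0 : Fin q, (e (ψ (bas (finSumFinEquiv (Sum.inr j0))))).2 = -(bQ j0) := by
    intro j0
    have h1 : bas (finSumFinEquiv (Sum.inr j0)) = s (bQ j0) := by
      rw [hbase, hesymm, hgBA]
      simp [hbP, Module.Basis.prod_apply]
    set v : A := s (bQ j0) with hv
    rw [h1, he, hfAB2]
    have h2 : S.mkQ (ψ v + v) = 0 := by
      rw [Submodule.mkQ_apply, Submodule.Quotient.mk_eq_zero]; exact hsum v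
    have h3 : S.mkQ v = bQ j0 := hsq _
    rw [map_add, h3] at h2
    exact eq_neg_of_add_eq_zero_left h2
  have hM : ∀ (ki kj : Fin r ⊕ Fin q),
      LinearMap.toMatrix bas bas ψ (finSumFinEquiv ki) (finSumFinEquiv kj) =
        bP.repr (e (ψ (bas (finSumFinEquiv kj)))) ki := fun ki kj => by
    rw [LinearMap.toMatrix_apply, hrepr]
  refine ⟨r + q, bas, ?_, ?_⟩
  · intro i j hlt
    obtain ⟨ki, rfl⟩ := finSumFinEquiv.surjective i
    obtain ⟨kj, rfl⟩ := finSumFinEquiv.surjective j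
    rw [Fin.lt_def] at hlt
    rw [hM]
    rcases kj with j0 | j0
    · rcases ki with i0 | i0
      · simp only [finSumFinEquiv_apply_left, Fin.coe_castAdd] at hlt
        have hne : j0 ≠ i0 := fun hEq => by subst hEq; exact lt_irrefl _ hlt
        rw [hcol1]
        show bS.repr (bS j0) i0 = 0
        rw [Module.Basis.repr_self]
        exact Finsupp.single_eq_of_ne hne.symm
      · rw [hcol1]
        show bQ.repr 0 i0 = 0
        simp
    · rcases ki with i0 | i0
      · exfalso
        simp only [finSumFinEquiv_apply_left, finSumFinEquiv_apply_right, Fin.coe_castAdd,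
          Fin.coe_natAdd] at hlt
        have := i0.isLt
        omega
      · simp only [finSumFinEquiv_apply_right, Fin.coe_natAdd] at hlt
        have hlt' : (j0 : ℕ) < (i0 : ℕ) := by omega
        have hne : j0 ≠ i0 := fun hEq => by subst hEq; exact lt_irrefl _ hlt'
        show bQ.repr ((e (ψ (bas (finSumFinEquiv (Sum.inr j0))))).2) i0 = 0
        rw [hcol2]
        rw [map_neg, Finsupp.neg_apply, Module.Basis.repr_self, Finsupp.single_eq_of_ne hne.symm, neg_zero]
  · intro i
    obtain ⟨k, rfl⟩ := finSumFinEquiv.surjective i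
    rcases k with i0 | j0
    · left
      rw [hM, hcol1]
      show bS.repr (bS i0) i0 = 1
      rw [Module.Basis.repr_self]
      exact Finsupp.single_eq_same
    · right
      rw [hM]
      show bQ.repr ((e (ψ (bas (finSumFinEquiv (Sum.inr j0))))).2) j0 = -1
      rw [hcol2, map_neg, Finsupp.neg_apply, Module.Basis.repr_self, Finsupp.single_eq_same]

theorem main_glue (A : Type*) [AddCommGroup A] [Module.Free ℤ A] [Module.Finite ℤ A]
    (φ : A ≃+ A) (hφ : ∀ a, φ (φ a) = a) :
    ∃ a b : ℕ, Nonempty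
      ((A ⧸ (AddMonoidHom.id A - φ.toAddMonoidHom).range) ≃+
        ((Fin a → ℤ) × (Fin b → ZMod 2))) := by
  classical
  set H : AddSubgroup A := (AddMonoidHom.id A - φ.toAddMonoidHom).range with hH
  haveI : AddGroup.FG A := Module.Finite.iff_addGroup_fg.mp inferInstance
  haveI : AddGroup.FG (A ⧸ H) :=
    AddGroup.fg_of_surjective (f := QuotientAddGroup.mk' H) (QuotientAddGroup.mk'_surjective H)
  apply aux_fg_exp2
  rintro x ⟨n, hn, hnx⟩
  obtain ⟨a, rfl⟩ := QuotientAddGroup.mk'_surjective H x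
  rw [← map_nsmul] at hnx
  have hmem : n • a ∈ H := (QuotientAddGroup.eq_zero_iff _).mp hnx
  obtain ⟨b, hb⟩ := hmem
  have hb' : b - φ b = n • a := by simpa using hb
  have hphi : φ (n • a) = -(n • a) := by
    rw [← hb', map_sub, hφ b, ← neg_sub]
  have hz : (n : ℤ) • (a + φ a) = 0 := by
    rw [natCast_zsmul, smul_add, ← map_nsmul, hphi, add_neg_cancel]
  have hfix : a + φ a = 0 := by
    rcases smul_eq_zero.mp hz with h | h
    · exact absurd h (by exact_mod_cast hn.ne')
    · exact h
  have h2a : 2 • a ∈ H := by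
    have : (2 : ℕ) • a = a - φ a := by
      have : φ a = -a := eq_neg_of_add_eq_zero_right hfix
      rw [two_nsmul, this]; abel
    rw [this]
    exact ⟨a, by simp⟩
  rw [← map_nsmul]
  exact (QuotientAddGroup.eq_zero_iff _).mpr h2a

/-- If `φ` is an automorphism of a finitely generated free abelian
group `A` with `φ² = id`, then `A` has a ℤ-basis in which the matrix of `φ` is
(block) upper triangular with diagonal entries `±1`, and moreover
`A / im(id − φ) ≅ ℤ^a ⊕ (ℤ/2ℤ)^b` for some `a b : ℕ`. -/
theorem involution_upper_triangular_basis_and_coinvariants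
    (A : Type*) [AddCommGroup A] [Module.Free ℤ A] [Module.Finite ℤ A]
    (φ : A ≃+ A) (hφ : ∀ a, φ (φ a) = a) :
    (∃ (n : ℕ) (bas : Module.Basis (Fin n) ℤ A),
      (∀ i j : Fin n, j < i →
        LinearMap.toMatrix bas bas (φ.toAddMonoidHom.toIntLinearMap) i j = 0) ∧
      (∀ i : Fin n,
        LinearMap.toMatrix bas bas (φ.toAddMonoidHom.toIntLinearMap) i i = 1 ∨
        LinearMap.toMatrix bas bas (φ.toAddMonoidHom.toIntLinearMap) i i = -1)) ∧
    (∃ a b : ℕ, Nonempty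
      ((A ⧸ (AddMonoidHom.id A - φ.toAddMonoidHom).range) ≃+
        ((Fin a → ℤ) × (Fin b → ZMod 2)))) := by
  exact ⟨aux_part1 φ hφ, main_glue A φ hφ⟩
end
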